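/- Let (T_t)_{t ≥ 0} be a strongly continuous semigroup of operators on a separable infinite-dimensional complex Banach space X. Define X₀ = {x ∈ X : T_t x → 0 as t → ∞} and X_∞ = {x ∈ X : for every ε > 0 there exist w ∈ X, α ∈ 𝔻 and t > 0 with ‖w‖ < ε and ‖α T_t w − x‖ < ε}. If both X₀ and X_∞ are dense subsets of X, then (T_t)_{t ≥ 0} is diskcyclic. -/

import Mathlib

open scoped NNReal

/-- If for a strongly continuous semigroup `(T t)` on a separable infinite-dimensional
complex Banach space both `X₀ = {x : T t x → 0}` and
`X_∞ = {x : ∀ ε > 0, ∃ w, α ∈ 𝔻, t > 0, ‖w‖ < ε ∧ ‖α • T t w - x‖ < ε}` are dense,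
then `(T t)` is diskcyclic. -/
theorem stmt_15 {X : Type*} [NormedAddCommGroup X] [NormedSpace ℂ X] [CompleteSpace X]
    [TopologicalSpace.SeparableSpace X] (hinf : ¬ FiniteDimensional ℂ X)
    (T : ℝ≥0 → X →L[ℂ] X)
    (hT0 : T 0 = ContinuousLinearMap.id ℂ X)
    (hTadd : ∀ t s : ℝ≥0, T (t + s) = T t ∘L T s)
    (hTcont : ∀ x : X, Continuous fun t : ℝ≥0 => T t x)
    (hX0 : Dense {x : X | Filter.Tendsto (fun t : ℝ≥0 => T t x) Filter.atTop (nhds 0)})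
    (hXinf : Dense {x : X | ∀ ε : ℝ, 0 < ε → ∃ (w : X) (α : ℂ) (t : ℝ≥0),
      ‖α‖ ≤ 1 ∧ 0 < t ∧ ‖w‖ < ε ∧ ‖α • T t w - x‖ < ε}) :
    ∃ x : X, Dense {y : X | ∃ α : ℂ, ‖α‖ ≤ 1 ∧ ∃ t : ℝ≥0, y = α • T t x} := by
  classical
  -- X is nontrivial
  have hnt : ∃ z : X, z ≠ 0 := by
    by_contra h
    push_neg at h
    have : Subsingleton X := ⟨fun a b => by rw [h a, h b]⟩
    exact hinf inferInstance
  -- key transitivity-type statement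
  have key : ∀ (v u : X) (δ ε : ℝ), 0 < δ → 0 < ε →
      ∃ (x : X) (α : ℂ) (t : ℝ≥0), ‖α‖ ≤ 1 ∧ ‖x - v‖ < δ ∧ ‖α • T t x - u‖ < ε := by
    intro v u δ ε hδ hε
    -- pick a nonzero point q near u
    obtain ⟨z, hz⟩ := hnt
    have hq : ∃ q : X, q ≠ 0 ∧ ‖q - u‖ < ε / 4 := by
      by_cases hu : u = 0
      · have hz' : (0:ℝ) < ‖z‖ := norm_pos_iff.2 hz
        refine ⟨(ε/8 / ‖z‖ : ℝ) • z, ?_, ?_⟩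
        · simp only [ne_eq, smul_eq_zero, not_or]
          exact ⟨by positivity, hz⟩
        · rw [hu, sub_zero, norm_smul, Real.norm_eq_abs,
            abs_of_pos (by positivity : (0:ℝ) < ε/8/‖z‖),
            div_mul_cancel₀ _ (ne_of_gt hz')]
          linarith
      · exact ⟨u, hu, by simpa using by positivity⟩
    obtain ⟨q, hq0, hqu⟩ := hq
    have hqn : (0:ℝ) < ‖q‖ := norm_pos_iff.2 hq0
    -- pick u' ∈ X_∞ near q, necessarily nonzero
    obtain ⟨u', hu'ball, hu'X⟩ := Metric.dense_iff.1 hXinf q (min (ε/4) (‖q‖/2))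
      (lt_min (by linarith) (by linarith))
    rw [Metric.mem_ball, dist_eq_norm] at hu'ball
    have hu'q : ‖u' - q‖ < min (ε/4) (‖q‖/2) := hu'ball
    have hu'norm : ‖q‖/2 ≤ ‖u'‖ := by
      have h1 : ‖u' - q‖ < ‖q‖/2 := lt_of_lt_of_le hu'q (min_le_right _ _)
      have := norm_sub_norm_le u' q
      have h2 : ‖q‖ - ‖u'‖ ≤ ‖u' - q‖ := by
        have := norm_sub_norm_le q u'
        rwa [norm_sub_rev] at this
      linarith
    have hu'pos : (0:ℝ) < ‖u'‖ := by linarith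
    have hu'u : ‖u' - u‖ < ε/2 := by
      calc ‖u' - u‖ ≤ ‖u' - q‖ + ‖q - u‖ := by
            have h := norm_add_le (u' - q) (q - u)
            have he : u' - q + (q - u) = u' - u := by abel
            rwa [he] at h
        _ < ε/4 + ε/4 := by
            have := lt_of_lt_of_le hu'q (min_le_left _ _)
            linarith
        _ = ε/2 := by ring
    -- pick y ∈ X₀ near v
    obtain ⟨y, hyball, hyX0⟩ := Metric.dense_iff.1 hX0 v (δ/2) (by linarith)
    rw [Metric.mem_ball, dist_eq_norm] at hyball
    -- pick t₀ with ‖T t y‖ < ε/4 for t ≥ t₀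
    have htend : Filter.Tendsto (fun t : ℝ≥0 => ‖T t y‖) Filter.atTop (nhds 0) := by
      simpa using (hyX0.norm)
    have hev : ∀ᶠ t : ℝ≥0 in Filter.atTop, ‖T t y‖ < ε/4 := by
      have := htend.eventually_lt_const (by linarith : (0:ℝ) < ε/4)
      exact this
    obtain ⟨t₀, ht₀⟩ := Filter.eventually_atTop.1 hev
    -- uniform bound on ‖T t‖ for t ≤ t₀
    have hbdd : ∃ C : ℝ, 0 < C ∧ ∀ t : ℝ≥0, t ≤ t₀ → ‖T t‖ ≤ C := by
      obtain ⟨C', hC'⟩ := banach_steinhaus (ι := {t : ℝ≥0 // t ≤ t₀})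
        (g := fun i => T i.1) (fun x => by
          obtain ⟨B, hB⟩ := (isCompact_Icc (a := (0:ℝ≥0)) (b := t₀)).exists_bound_of_continuousOn
            ((hTcont x).continuousOn)
          exact ⟨B, fun i => hB i.1 ⟨zero_le, i.2⟩⟩)
      exact ⟨max C' 1, lt_of_lt_of_le one_pos (le_max_right _ _),
        fun t ht => le_trans (hC' ⟨t, ht⟩) (le_max_left _ _)⟩
    obtain ⟨C, hCpos, hC⟩ := hbdd
    -- choose ε₁
    set ε₁ : ℝ := min (min (ε/4) (δ/2)) (‖u'‖ / (2 * (C + 1))) with hε₁def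
    have hε₁pos : 0 < ε₁ := by
      apply lt_min (lt_min (by linarith) (by linarith))
      positivity
    obtain ⟨w, α, t, hα, htpos, hw, hwu'⟩ := hu'X ε₁ hε₁pos
    -- t must exceed t₀
    have ht : t₀ ≤ t := by
      by_contra hlt
      push_neg at hlt
      have h1 : ‖α • T t w‖ ≤ C * ε₁ := by
        rw [norm_smul]
        calc ‖α‖ * ‖T t w‖ ≤ 1 * ‖T t w‖ := by
              apply mul_le_mul_of_nonneg_right hα (norm_nonneg _)
          _ = ‖T t w‖ := one_mul _
          _ ≤ ‖T t‖ * ‖w‖ := (T t).le_opNorm w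
          _ ≤ C * ε₁ := by
              apply mul_le_mul (hC t hlt.le) hw.le (norm_nonneg _) hCpos.le
      have h2 : ‖u'‖ ≤ ‖α • T t w‖ + ‖α • T t w - u'‖ := by
        have h := norm_sub_le (α • T t w) (α • T t w - u')
        have he : α • T t w - (α • T t w - u') = u' := by abel
        rwa [he] at h
      have hε₁le : ε₁ ≤ ‖u'‖ / (2 * (C + 1)) := min_le_right _ _
      have : ‖u'‖ ≤ C * ε₁ + ε₁ := by linarith [h2, h1, hwu'.le]
      have : ‖u'‖ ≤ (C + 1) * ε₁ := by linarith
      have h3 : (C + 1) * ε₁ ≤ (C + 1) * (‖u'‖ / (2 * (C + 1))) :=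
        mul_le_mul_of_nonneg_left hε₁le (by linarith)
      have h4 : (C + 1) * (‖u'‖ / (2 * (C + 1))) = ‖u'‖ / 2 := by
        field_simp
      linarith
    refine ⟨y + w, α, t, hα, ?_, ?_⟩
    · calc ‖y + w - v‖ = ‖(y - v) + w‖ := by rw [show y + w - v = (y - v) + w from by abel]
        _ ≤ ‖y - v‖ + ‖w‖ := norm_add_le _ _
        _ < δ/2 + δ/2 := by
            have : ε₁ ≤ δ/2 := le_trans (min_le_left _ _) (min_le_right _ _)
            linarith
        _ = δ := by ring
    · have hTy : ‖T t y‖ < ε/4 := ht₀ t ht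
      have hε₁ε : ε₁ ≤ ε/4 := le_trans (min_le_left _ _) (min_le_left _ _)
      calc ‖α • T t (y + w) - u‖
          = ‖α • T t y + (α • T t w - u') + (u' - u)‖ := by
            rw [map_add, smul_add,
              show α • T t y + α • T t w - u
                = α • T t y + (α • T t w - u') + (u' - u) from by abel]
        _ ≤ ‖α • T t y + (α • T t w - u')‖ + ‖u' - u‖ := norm_add_le _ _
        _ ≤ ‖α • T t y‖ + ‖α • T t w - u'‖ + ‖u' - u‖ := by
            linarith [norm_add_le (α • T t y) (α • T t w - u')]
        _ < ε/4 + ε/4 + ε/2 := by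
            have h1 : ‖α • T t y‖ ≤ ‖T t y‖ := by
              rw [norm_smul]
              calc ‖α‖ * ‖T t y‖ ≤ 1 * ‖T t y‖ :=
                    mul_le_mul_of_nonneg_right hα (norm_nonneg _)
                _ = ‖T t y‖ := one_mul _
            have h2 : ‖α • T t w - u'‖ < ε/4 := lt_of_lt_of_le hwu' hε₁ε
            linarith
        _ = ε := by ring
  -- Baire category argument
  have : Nonempty X := ⟨0⟩
  obtain ⟨d, hd⟩ := TopologicalSpace.exists_dense_seq X
  set F : ℕ × ℕ → Set X := fun p =>
    {x : X | ∃ (α : ℂ) (t : ℝ≥0), ‖α‖ ≤ 1 ∧ ‖α • T t x - d p.1‖ < 1/(p.2+1)} with hF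
  have hFopen : ∀ p, IsOpen (F p) := by
    intro p
    have : F p = ⋃ (q : ℂ × ℝ≥0) (_ : ‖q.1‖ ≤ 1),
        (fun x : X => q.1 • T q.2 x) ⁻¹' Metric.ball (d p.1) (1/(p.2+1)) := by
      ext x
      simp only [hF, Set.mem_setOf_eq, Set.mem_iUnion, Set.mem_preimage, Metric.mem_ball,
        dist_eq_norm, Prod.exists]
      constructor
      · rintro ⟨α, t, hα, h⟩; exact ⟨α, t, hα, h⟩
      · rintro ⟨α, t, hα, h⟩; exact ⟨α, t, hα, h⟩
    rw [this]
    apply isOpen_iUnion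
    intro q
    apply isOpen_iUnion
    intro _
    exact (Metric.isOpen_ball).preimage (((T q.2).continuous).const_smul q.1)
  have hFdense : ∀ p, Dense (F p) := by
    intro p
    rw [Metric.dense_iff]
    intro v r hr
    obtain ⟨x, α, t, hα, hxv, hxd⟩ := key v (d p.1) r (1/(p.2+1)) hr (by positivity)
    exact ⟨x, Metric.mem_ball.2 (by rwa [dist_eq_norm]), α, t, hα, hxd⟩
  have hdense : Dense (⋂ p, F p) := dense_iInter_of_isOpen hFopen hFdense
  obtain ⟨x, hx⟩ := hdense.nonempty
  refine ⟨x, Metric.dense_iff.2 fun z r hr => ?_⟩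
  obtain ⟨n, hn⟩ := hd.exists_dist_lt z (by linarith : (0:ℝ) < r/2)
  obtain ⟨m, hm⟩ := exists_nat_one_div_lt (by linarith : (0:ℝ) < r/2)
  have hxp : x ∈ F (n, m) := Set.mem_iInter.1 hx (n, m)
  obtain ⟨α, t, hα, hxd⟩ := hxp
  refine ⟨α • T t x, Metric.mem_ball.2 ?_, α, hα, t, rfl⟩
  calc dist (α • T t x) z ≤ dist (α • T t x) (d n) + dist (d n) z := dist_triangle _ _ _
    _ < 1/(m+1) + r/2 := by
        rw [dist_eq_norm]
        have : dist (d n) z = dist z (d n) := dist_comm _ _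
        exact add_lt_add hxd (by rw [this]; exact hn)
    _ < r/2 + r/2 := by
        have : (1:ℝ)/(m+1) < r/2 := by exact_mod_cast hm
        linarith
    _ = r := by ring
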